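/- For 1 ≤ n ≤ k, the pmf of the Poisson distribution of order k satisfies p_n = e^{-kλ} Σ_{j=1}^{n} C(n-1, j-1) λ^j / j!. Equivalently, Σ_{n₁+2n₂+...+k·n_k = n} λ^{n₁+...+n_k}/(n₁!···n_k!) = Σ_{j=1}^{n} C(n-1, j-1) λ^j / j! for 1 ≤ n ≤ k. -/

import Mathlib

open Finset

/-- The polynomial part of the pmf of the Poisson distribution of order `k`:
`P k n x = ∑_{n₁+2n₂+⋯+k·n_k = n} x^{n₁+⋯+n_k} / (n₁!⋯n_k!)`. -/
noncomputable def poissonOrderKSum (k n : ℕ) (x : ℝ) : ℝ :=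
  ∑ f ∈ ((Fintype.piFinset fun _ : Fin k => Finset.range (n + 1)).filter
      fun f => ∑ i : Fin k, (i.1 + 1) * f i = n),
    x ^ (∑ i : Fin k, f i) / ∏ i : Fin k, (Nat.factorial (f i) : ℝ)

open PowerSeries in
/-- Coefficient of `X^n` in `(X + X² + ⋯ + X^k)^j` is `C(n-1, j-1)` when `1 ≤ j ≤ n ≤ k`. -/
lemma coeff_geomlike_pow (k n j : ℕ) (hj1 : 1 ≤ j) (hjn : j ≤ n) (hnk : n ≤ k) :
    (PowerSeries.coeff (R := ℝ) n) ((∑ i ∈ Finset.range k, (PowerSeries.X : ℝ⟦X⟧) ^ (i + 1)) ^ j)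
      = (Nat.choose (n - 1) (j - 1) : ℝ) := by
  set q : ℝ⟦X⟧ := ∑ i ∈ Finset.range k, (PowerSeries.X : ℝ⟦X⟧) ^ i with hq
  have hp : (∑ i ∈ Finset.range k, (PowerSeries.X : ℝ⟦X⟧) ^ (i + 1))
      = PowerSeries.X * q := by
    rw [hq, Finset.mul_sum]
    exact Finset.sum_congr rfl fun i _ => by ring
  -- q * (1 - X) = 1 - X^k
  have hgeom : q * (1 - PowerSeries.X) = 1 - (PowerSeries.X : ℝ⟦X⟧) ^ k := by
    have := geom_sum_mul (PowerSeries.X : ℝ⟦X⟧) k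
    have h2 : q * (PowerSeries.X - 1) = (PowerSeries.X : ℝ⟦X⟧) ^ k - 1 := this
    linear_combination -h2
  have hmk1 : (PowerSeries.mk 1 : ℝ⟦X⟧) * (1 - PowerSeries.X) = 1 :=
    PowerSeries.mk_one_mul_one_sub_eq_one ℝ
  have hu : IsUnit (1 - PowerSeries.X : ℝ⟦X⟧) :=
    IsUnit.of_mul_eq_one _ (by rw [mul_comm]; exact hmk1)
  -- q = (1 - X^k) * mk 1
  have hqeq : q = (1 - (PowerSeries.X : ℝ⟦X⟧) ^ k) * PowerSeries.mk 1 := by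
    apply hu.mul_right_cancel
    rw [hgeom, mul_assoc, hmk1, mul_one]
  -- (1 - X^k)^j = 1 - X^k * s  for some s
  obtain ⟨s, hs⟩ : (PowerSeries.X : ℝ⟦X⟧) ^ k ∣
      1 - (1 - (PowerSeries.X : ℝ⟦X⟧) ^ k) ^ j := by
    have := sub_dvd_pow_sub_pow (1 : ℝ⟦X⟧) (1 - (PowerSeries.X : ℝ⟦X⟧) ^ k) j
    simpa using this
  have hqj : q ^ j = PowerSeries.mk 1 ^ j
      - (PowerSeries.X : ℝ⟦X⟧) ^ k * (s * PowerSeries.mk 1 ^ j) := by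
    rw [hqeq, mul_pow]
    have h1 : ((1 - (PowerSeries.X : ℝ⟦X⟧) ^ k) ^ j)
        = 1 - (PowerSeries.X : ℝ⟦X⟧) ^ k * s := by linear_combination -hs
    rw [h1]; ring
  rw [hp, mul_pow, PowerSeries.coeff_X_pow_mul' _ j n, if_pos hjn, hqj, map_sub]
  have hnj : ¬ (k ≤ n - j) := by omega
  rw [PowerSeries.coeff_X_pow_mul', if_neg hnj, sub_zero]
  obtain ⟨j', rfl⟩ : ∃ j', j = j' + 1 := ⟨j - 1, by omega⟩
  rw [PowerSeries.mk_one_pow_eq_mk_choose_add, PowerSeries.coeff_mk]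
  congr 2
  omega

open PowerSeries in
/-- Coefficient of `X^n` in `(X + ⋯ + X^k)^j` via the multinomial theorem. -/
lemma coeff_geomlike_pow_eq_sum (k n j : ℕ) :
    (PowerSeries.coeff (R := ℝ) n) ((∑ i ∈ Finset.range k, (PowerSeries.X : ℝ⟦X⟧) ^ (i + 1)) ^ j)
      = ∑ g ∈ (Finset.piAntidiag (Finset.range k) j).filter
          (fun g => ∑ i ∈ Finset.range k, (i + 1) * g i = n),
          (Nat.multinomial (Finset.range k) g : ℝ) := by
  rw [Finset.sum_pow_eq_sum_piAntidiag, map_sum, Finset.sum_filter]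
  refine Finset.sum_congr rfl fun g hg => ?_
  have hprod : ∏ i ∈ Finset.range k, ((PowerSeries.X : ℝ⟦X⟧) ^ (i + 1)) ^ g i
      = (PowerSeries.X : ℝ⟦X⟧) ^ (∑ i ∈ Finset.range k, (i + 1) * g i) := by
    simp_rw [← pow_mul]
    exact Finset.prod_pow_eq_pow_sum _ _ _
  have hcast : ((Nat.multinomial (Finset.range k) g : ℕ) : ℝ⟦X⟧)
      = PowerSeries.C (R := ℝ) ((Nat.multinomial (Finset.range k) g : ℕ) : ℝ) := by
    rw [map_natCast]
  rw [hprod, hcast, PowerSeries.coeff_C_mul_X_pow]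
  by_cases h : ∑ i ∈ Finset.range k, (i + 1) * g i = n
  · rw [if_pos h, if_pos h.symm]
  · rw [if_neg (fun hn => h hn.symm), if_neg h]

theorem poissonOrderK_pmf_small_n (k n : ℕ) (hn1 : 1 ≤ n) (hnk : n ≤ k) (lam : ℝ) :
    poissonOrderKSum k n lam =
      ∑ j ∈ Finset.Icc 1 n, (Nat.choose (n - 1) (j - 1) : ℝ) * lam ^ j / (Nat.factorial j : ℝ) := by
  classical
  -- rewrite the RHS via the two coefficient computations
  have hRHS : ∀ j ∈ Finset.Icc 1 n,
      (Nat.choose (n - 1) (j - 1) : ℝ) * lam ^ j / (Nat.factorial j : ℝ)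
        = ∑ g ∈ (Finset.piAntidiag (Finset.range k) j).filter
            (fun g => ∑ i ∈ Finset.range k, (i + 1) * g i = n),
            (Nat.multinomial (Finset.range k) g : ℝ) * lam ^ j / (Nat.factorial j : ℝ) := by
    intro j hj
    rw [Finset.mem_Icc] at hj
    rw [← Finset.sum_div, ← Finset.sum_mul, ← coeff_geomlike_pow_eq_sum k n j,
      coeff_geomlike_pow k n j hj.1 hj.2 hnk]
  rw [Finset.sum_congr rfl hRHS]
  -- partition the LHS sum according to j = ∑ f i
  unfold poissonOrderKSum
  set A := ((Fintype.piFinset fun _ : Fin k => Finset.range (n + 1)).filter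
      fun f => ∑ i : Fin k, (i.1 + 1) * f i = n) with hA
  have hmaps : ∀ f ∈ A, (∑ i : Fin k, f i) ∈ Finset.Icc 1 n := by
    intro f hf
    rw [hA, Finset.mem_filter] at hf
    rw [Finset.mem_Icc]
    constructor
    · by_contra h
      push_neg at h
      interval_cases hs : (∑ i : Fin k, f i)
      · have hall : ∀ i : Fin k, f i = 0 := by
          intro i
          have := Finset.sum_eq_zero_iff.mp hs
          exact this i (Finset.mem_univ i)
        have : ∑ i : Fin k, (i.1 + 1) * f i = 0 := by
          apply Finset.sum_eq_zero; intro i _; rw [hall i]; ring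
        omega
    · calc ∑ i : Fin k, f i ≤ ∑ i : Fin k, (i.1 + 1) * f i :=
            Finset.sum_le_sum fun i _ => Nat.le_mul_of_pos_left _ (Nat.succ_pos _)
        _ = n := hf.2
  rw [← Finset.sum_fiberwise_of_maps_to hmaps]
  refine Finset.sum_congr rfl fun j hj => ?_
  rw [Finset.mem_Icc] at hj
  -- bijection between {f ∈ A | ∑ f = j} and the filtered piAntidiag
  refine Finset.sum_nbij'
    (fun f => fun m => if h : m < k then f ⟨m, h⟩ else 0)
    (fun g => fun i : Fin k => g i.1) ?_ ?_ ?_ ?_ ?_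
  · -- forward membership
    intro f hf
    rw [Finset.mem_filter] at hf
    obtain ⟨hfA, hfs⟩ := hf
    rw [hA, Finset.mem_filter] at hfA
    obtain ⟨_, hfw⟩ := hfA
    have hsum : ∀ (w : ℕ → ℕ → ℕ), (∑ m ∈ Finset.range k,
        w m (if h : m < k then f ⟨m, h⟩ else 0)) = ∑ i : Fin k, w i.1 (f i) := by
      intro w
      rw [Finset.sum_range fun m => w m _]
      refine Finset.sum_congr rfl fun i _ => ?_
      rw [dif_pos i.2]
    rw [Finset.mem_filter, Finset.mem_piAntidiag]
    refine ⟨⟨?_, ?_⟩, ?_⟩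
    · rw [hsum fun _ v => v]; exact hfs
    · intro m hm
      by_contra hmk
      rw [Finset.mem_range] at hmk
      push_neg at hmk
      rw [dif_neg (by omega)] at hm
      exact hm rfl
    · rw [hsum fun m v => (m + 1) * v]; exact hfw
  · -- backward membership
    intro g hg
    rw [Finset.mem_filter, Finset.mem_piAntidiag] at hg
    obtain ⟨⟨hgs, hgsupp⟩, hgw⟩ := hg
    have hwsum : ∑ i : Fin k, (i.1 + 1) * g i.1 = n := by
      rw [Fin.sum_univ_eq_sum_range (fun m => (m + 1) * g m) k]; exact hgw
    rw [Finset.mem_filter, hA, Finset.mem_filter, Fintype.mem_piFinset]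
    refine ⟨⟨fun i => ?_, hwsum⟩, ?_⟩
    · rw [Finset.mem_range]
      have hle : (i.1 + 1) * g i.1 ≤ n := by
        rw [← hwsum]
        exact Finset.single_le_sum (f := fun i : Fin k => (i.1 + 1) * g i.1)
          (fun _ _ => Nat.zero_le _) (Finset.mem_univ i)
      have : g i.1 ≤ (i.1 + 1) * g i.1 := Nat.le_mul_of_pos_left _ (Nat.succ_pos _)
      omega
    · rw [Fin.sum_univ_eq_sum_range (fun m => g m) k]; exact hgs
  · -- left inverse
    intro f _
    funext i
    simp [i.2]
  · -- right inverse
    intro g hg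
    rw [Finset.mem_filter, Finset.mem_piAntidiag] at hg
    funext m
    dsimp only
    by_cases h : m < k
    · simp [h]
    · rw [dif_neg h]
      by_contra hne
      have := hg.1.2 m (fun h0 => hne h0.symm)
      rw [Finset.mem_range] at this
      exact h this
  · -- terms agree
    intro f hf
    rw [Finset.mem_filter] at hf
    obtain ⟨hfA, hfs⟩ := hf
    have hprod : ∏ i : Fin k, (Nat.factorial (f i) : ℝ)
        = ∏ m ∈ Finset.range k,
            (Nat.factorial (if h : m < k then f ⟨m, h⟩ else 0) : ℝ) := by
      rw [Finset.prod_range fun m => ((Nat.factorial (if h : m < k then f ⟨m, h⟩ else 0) : ℝ))]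
      refine (Finset.prod_congr rfl fun i _ => ?_).symm
      rw [dif_pos i.2]
    have hspec := Nat.multinomial_spec (Finset.range k)
      (fun m => if h : m < k then f ⟨m, h⟩ else 0)
    have hsumg : ∑ m ∈ Finset.range k, (if h : m < k then f ⟨m, h⟩ else 0) = j := by
      rw [Finset.sum_range fun m => (if h : m < k then f ⟨m, h⟩ else 0)]
      rw [← hfs]
      refine Finset.sum_congr rfl fun i _ => ?_
      rw [dif_pos i.2]
    rw [hsumg] at hspec
    -- cast to ℝ
    have hspecR : (∏ m ∈ Finset.range k,
        (Nat.factorial (if h : m < k then f ⟨m, h⟩ else 0) : ℝ))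
          * (Nat.multinomial (Finset.range k)
              (fun m => if h : m < k then f ⟨m, h⟩ else 0) : ℝ)
        = (Nat.factorial j : ℝ) := by
      rw [← Nat.cast_prod, ← Nat.cast_mul, hspec]
    rw [hfs, hprod]
    have hprodne : (∏ m ∈ Finset.range k,
        (Nat.factorial (if h : m < k then f ⟨m, h⟩ else 0) : ℝ)) ≠ 0 :=
      Finset.prod_ne_zero_iff.mpr fun m _ => Nat.cast_ne_zero.mpr (Nat.factorial_ne_zero _)
    have hfactne : (Nat.factorial j : ℝ) ≠ 0 := Nat.cast_ne_zero.mpr (Nat.factorial_ne_zero _)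
    rw [div_eq_div_iff hprodne hfactne]
    linear_combination (-(lam ^ j)) * hspecR
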